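/- Let S be a set of q integers. Then there exists t ∈ (0,1) such that |π_t(S)| > q/3, where π_t(n) = ⌊q·{tn}⌋. -/

import Mathlib

open Finset

lemma cs_fibers (S : Finset ℤ) (g : ℤ → ℤ) :
    S.card ^ 2 ≤ (S.image g).card * ((S ×ˢ S).filter (fun p => g p.1 = g p.2)).card := by
  classical
  set T := S.image g with hT
  have h1 : S.card = ∑ v ∈ T, (S.filter (fun x => g x = v)).card :=
    Finset.card_eq_sum_card_fiberwise (fun x hx => Finset.mem_image_of_mem g hx)
  have h2 : ((S ×ˢ S).filter (fun p => g p.1 = g p.2)).card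
      = ∑ v ∈ T, (S.filter (fun x => g x = v)).card ^ 2 := by
    rw [Finset.card_eq_sum_card_fiberwise
      (f := fun p : ℤ × ℤ => g p.1) (t := T)
      (fun p hp => Finset.mem_image_of_mem g (Finset.mem_product.mp (Finset.mem_filter.mp hp).1).1)]
    refine Finset.sum_congr rfl fun v hv => ?_
    have : ((S ×ˢ S).filter (fun p => g p.1 = g p.2)).filter (fun p => g p.1 = v)
        = (S.filter (fun x => g x = v)) ×ˢ (S.filter (fun x => g x = v)) := by
      ext ⟨x, y⟩
      simp only [Finset.mem_filter, Finset.mem_product]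
      constructor
      · rintro ⟨⟨⟨hx, hy⟩, hxy⟩, hv'⟩
        exact ⟨⟨hx, hv'⟩, ⟨hy, hxy ▸ hv'⟩⟩
      · rintro ⟨⟨hx, hv1⟩, ⟨hy, hv2⟩⟩
        exact ⟨⟨⟨hx, hy⟩, hv1.trans hv2.symm⟩, hv1⟩
    rw [this, Finset.card_product, sq]
  have key : ((S.card : ℤ)) ^ 2 ≤ (T.card : ℤ) *
      ∑ v ∈ T, ((S.filter (fun x => g x = v)).card : ℤ) ^ 2 := by
    have := sq_sum_le_card_mul_sum_sq
      (s := T) (f := fun v => ((S.filter (fun x => g x = v)).card : ℤ))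
    calc ((S.card : ℤ)) ^ 2
        = (∑ v ∈ T, ((S.filter (fun x => g x = v)).card : ℤ)) ^ 2 := by
          rw [← Nat.cast_sum, ← h1]
      _ ≤ _ := this
  rw [h2]
  exact_mod_cast key

lemma floor_abs_sub {a b : ℝ} (h : ⌊a⌋ = ⌊b⌋) : |a - b| < 1 := by
  have hc : ((⌊a⌋ : ℝ)) = (⌊b⌋ : ℝ) := by exact_mod_cast h
  have h1 := Int.floor_le a
  have h2 := Int.lt_floor_add_one a
  have h3 := Int.floor_le b
  have h4 := Int.lt_floor_add_one b
  rw [abs_lt]; constructor <;> linarith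

lemma pair_count (q N : ℕ) (hq : 0 < q) (hN : N.Prime) (m n : ℤ) (hmn : m ≠ n)
    (hd : (m - n).natAbs < N) :
    ((Finset.range N).filter (fun k : ℕ => ⌊(q : ℝ) * Int.fract ((k : ℝ) / (N : ℝ) * m)⌋ =
      ⌊(q : ℝ) * Int.fract ((k : ℝ) / (N : ℝ) * n)⌋)).card ≤ 2 * (N / q) + 1 := by
  have hN0 : 0 < N := hN.pos
  have hNZ : (0 : ℤ) < (N : ℤ) := by exact_mod_cast hN0
  have hNR : (0 : ℝ) < (N : ℝ) := by exact_mod_cast hN0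
  set bad : Finset ℕ := (Finset.range N).filter
    (fun j => (q : ℤ) * (j : ℤ) < (N : ℤ) ∨ (q : ℤ) * ((N : ℤ) - (j : ℤ)) < (N : ℤ)) with hbad
  -- step 1: mapping
  have hmap : ∀ k ∈ (Finset.range N).filter
      (fun k : ℕ => ⌊(q : ℝ) * Int.fract ((k : ℝ) / (N : ℝ) * m)⌋ =
        ⌊(q : ℝ) * Int.fract ((k : ℝ) / (N : ℝ) * n)⌋),
      (((k : ℤ) * (m - n)) % (N : ℤ)).toNat ∈ bad := by
    intro k hk
    rw [Finset.mem_filter, Finset.mem_range] at hk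
    obtain ⟨hkN, hfl⟩ := hk
    set a := ((k : ℤ) * m) % (N : ℤ) with ha
    set b := ((k : ℤ) * n) % (N : ℤ) with hb
    have ha0 : 0 ≤ a := Int.emod_nonneg _ hNZ.ne'
    have haN : a < N := Int.emod_lt_of_pos _ hNZ
    have hb0 : 0 ≤ b := Int.emod_nonneg _ hNZ.ne'
    have hbN : b < N := Int.emod_lt_of_pos _ hNZ
    have hfa : Int.fract ((k : ℝ) / (N : ℝ) * m) = (a : ℝ) / (N : ℝ) := by
      have e : (k : ℝ) / (N : ℝ) * m = (((k : ℤ) * m : ℤ) : ℝ) / (N : ℝ) := by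
        push_cast; ring
      rw [e, Int.fract_div_intCast_eq_div_intCast_mod]
    have hfb : Int.fract ((k : ℝ) / (N : ℝ) * n) = (b : ℝ) / (N : ℝ) := by
      have e : (k : ℝ) / (N : ℝ) * n = (((k : ℤ) * n : ℤ) : ℝ) / (N : ℝ) := by
        push_cast; ring
      rw [e, Int.fract_div_intCast_eq_div_intCast_mod]
    rw [hfa, hfb] at hfl
    have habs : (q : ℤ) * |a - b| < (N : ℤ) := by
      have h5 : |(q : ℝ) * ((a : ℝ) / N) - (q : ℝ) * ((b : ℝ) / N)| < 1 := floor_abs_sub hfl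
      have h6 : (q : ℝ) * ((a : ℝ) / N) - (q : ℝ) * ((b : ℝ) / N)
          = (q : ℝ) * ((a : ℝ) - (b : ℝ)) / N := by ring
      rw [h6, abs_div, abs_of_pos hNR, div_lt_one hNR, abs_mul,
        abs_of_nonneg (by positivity : (0:ℝ) ≤ (q:ℝ))] at h5
      have : (q : ℝ) * |((a - b : ℤ) : ℝ)| < (N : ℝ) := by push_cast at h5 ⊢; exact h5
      rw [← Int.cast_abs] at this
      exact_mod_cast this
    set j := ((k : ℤ) * (m - n)) % (N : ℤ) with hj
    have hj0 : 0 ≤ j := Int.emod_nonneg _ hNZ.ne'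
    have hjN : j < N := Int.emod_lt_of_pos _ hNZ
    have hjab : (a - b) % (N : ℤ) = j := by
      rw [ha, hb, ← Int.sub_emod, hj]
      congr 1; ring
    have hmem : (q : ℤ) * j < (N : ℤ) ∨ (q : ℤ) * ((N : ℤ) - j) < (N : ℤ) := by
      rcases le_or_gt b a with hba | hab
      · have : (a - b) % (N : ℤ) = a - b := Int.emod_eq_of_lt (by omega) (by omega)
        left
        rw [← hjab, this]
        calc (q : ℤ) * (a - b) = (q : ℤ) * |a - b| := by rw [abs_of_nonneg (by omega)]
          _ < N := habs
      · have : (a - b) % (N : ℤ) = a - b + N := by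
          rw [← Int.add_mul_emod_self_left (b := (N : ℤ)) (c := 1), mul_one]
          exact Int.emod_eq_of_lt (by omega) (by omega)
        right
        have hjv : j = a - b + N := by rw [← hjab, this]
        have : (N : ℤ) - j = b - a := by omega
        rw [this]
        calc (q : ℤ) * (b - a) = (q : ℤ) * |a - b| := by rw [abs_of_neg (by omega)]; ring
          _ < N := habs
    rw [hbad, Finset.mem_filter, Finset.mem_range]
    constructor
    · omega
    · rw [Int.toNat_of_nonneg hj0]
      exact hmem
  -- step 2: injectivity
  have hinj : Set.InjOn (fun k : ℕ => (((k : ℤ) * (m - n)) % (N : ℤ)).toNat)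
      ((Finset.range N).filter
      (fun k : ℕ => ⌊(q : ℝ) * Int.fract ((k : ℝ) / (N : ℝ) * m)⌋ =
        ⌊(q : ℝ) * Int.fract ((k : ℝ) / (N : ℝ) * n)⌋) : Set ℕ) := by
    intro k₁ hk₁ k₂ hk₂ heq
    simp only [Finset.coe_filter, Set.mem_setOf_eq, Finset.mem_range] at hk₁ hk₂
    have heq' : (((k₁ : ℤ) * (m - n)) % (N : ℤ)).toNat
        = (((k₂ : ℤ) * (m - n)) % (N : ℤ)).toNat := heq
    have h1 : ((k₁ : ℤ) * (m - n)) % (N : ℤ) = ((k₂ : ℤ) * (m - n)) % (N : ℤ) := by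
      have e1 : 0 ≤ ((k₁ : ℤ) * (m - n)) % (N : ℤ) := Int.emod_nonneg _ hNZ.ne'
      have e2 : 0 ≤ ((k₂ : ℤ) * (m - n)) % (N : ℤ) := Int.emod_nonneg _ hNZ.ne'
      omega
    have hdvd : (N : ℤ) ∣ ((k₁ : ℤ) - k₂) * (m - n) := by
      have := Int.ModEq.dvd (Int.ModEq.symm h1)
      rwa [show (k₁ : ℤ) * (m - n) - (k₂ : ℤ) * (m - n)
        = ((k₁ : ℤ) - k₂) * (m - n) from by ring] at this
    have hp : Prime (N : ℤ) := Nat.prime_iff_prime_int.mp hN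
    rcases hp.dvd_mul.mp hdvd with h | h
    · have : (k₁ : ℤ) - k₂ = 0 := Int.eq_zero_of_abs_lt_dvd h (by
        rw [abs_lt]; constructor <;> [push_cast; push_cast] <;> omega)
      omega
    · exfalso
      have hd0 : (0 : ℤ) < |m - n| := by
        rw [abs_pos]; exact sub_ne_zero_of_ne hmn
      have := Int.le_of_dvd hd0 ((dvd_abs _ _).mpr h)
      rw [Int.abs_eq_natAbs] at this
      omega
  have h1 := Finset.card_le_card_of_injOn _ hmap hinj
  -- step 3: size of bad
  have h2 : bad.card ≤ 2 * (N / q) + 1 := by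
    have hsub : bad ⊆ Finset.range (N / q + 1) ∪ Finset.Ico (N - N / q) N := by
      intro j hjm
      rw [hbad, Finset.mem_filter, Finset.mem_range] at hjm
      obtain ⟨hjN, hc⟩ := hjm
      rw [Finset.mem_union, Finset.mem_range, Finset.mem_Ico]
      rcases hc with h | h
      · left
        have hn : q * j < N := by exact_mod_cast h
        have : j ≤ N / q := (Nat.le_div_iff_mul_le hq).mpr
          (by rw [mul_comm]; exact hn.le)
        omega
      · right
        have he : ((N - j : ℕ) : ℤ) = (N : ℤ) - (j : ℤ) := by omega
        have hn : q * (N - j) < N := by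
          have : (q : ℤ) * ((N - j : ℕ) : ℤ) < (N : ℤ) := by rw [he]; exact h
          exact_mod_cast this
        have : N - j ≤ N / q := (Nat.le_div_iff_mul_le hq).mpr
          (by rw [mul_comm]; exact hn.le)
        omega
    have := (Finset.card_le_card hsub).trans (Finset.card_union_le _ _)
    rw [Finset.card_range, Nat.card_Ico] at this
    have hdle : N / q ≤ N := Nat.div_le_self _ _
    omega
  exact h1.trans h2

theorem stmt_13 (q : ℕ) (hq : 1 ≤ q) (S : Finset ℤ) (hS : S.card = q) :
    ∃ t ∈ Set.Ioo (0 : ℝ) 1,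
      (q : ℝ) / 3 < ((S.image (fun n : ℤ => ⌊(q : ℝ) * Int.fract (t * n)⌋)).card : ℝ) := by
  have hSne : S.Nonempty := Finset.card_pos.mp (by omega)
  by_cases hq3 : q < 3
  · refine ⟨1/2, by norm_num, ?_⟩
    have h1 : 1 ≤ (S.image (fun n : ℤ => ⌊(q : ℝ) * Int.fract ((1/2 : ℝ) * n)⌋)).card :=
      Finset.card_pos.mpr (hSne.image _)
    have h2 : (q : ℝ) ≤ 2 := by exact_mod_cast (by omega : q ≤ 2)
    have h3 : (1 : ℝ) ≤ ((S.image (fun n : ℤ => ⌊(q : ℝ) * Int.fract ((1/2 : ℝ) * n)⌋)).card : ℝ) := by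
      exact_mod_cast h1
    linarith
  · push_neg at hq3
    have hq0 : 0 < q := by omega
    -- choose a big prime N
    set M := S.sup (fun x => x.natAbs) with hM
    obtain ⟨N, hNB, hNp⟩ := Nat.exists_infinite_primes (q * q + 2 * M + 2)
    have hN0 : 0 < N := hNp.pos
    have hNq : q * q < N := by omega
    have hNd : ∀ m ∈ S, ∀ n ∈ S, (m - n).natAbs < N := by
      intro m hm n hn
      have h1 : m.natAbs ≤ M := Finset.le_sup (f := fun x : ℤ => x.natAbs) hm
      have h2 : n.natAbs ≤ M := Finset.le_sup (f := fun x : ℤ => x.natAbs) hn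
      have : (m - n).natAbs ≤ m.natAbs + n.natAbs := Int.natAbs_sub_le m n
      omega
    -- collision counting
    set f : ℕ → ℤ → ℤ := fun k x => ⌊(q : ℝ) * Int.fract ((k : ℝ) / (N : ℝ) * x)⌋ with hf
    set Z : ℕ → ℕ := fun k => ((S ×ˢ S).filter (fun p => f k p.1 = f k p.2)).card with hZ
    have hswap : ∑ k ∈ Finset.range N, Z k
        = ∑ p ∈ S ×ˢ S, ((Finset.range N).filter (fun k => f k p.1 = f k p.2)).card := by
      simp only [hZ, Finset.card_filter]
      rw [Finset.sum_comm]
    -- diagonal card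
    have hdcard : ((S ×ˢ S).filter (fun p => p.1 = p.2)).card = q := by
      apply le_antisymm
      · calc ((S ×ˢ S).filter (fun p => p.1 = p.2)).card ≤ S.card := by
              apply Finset.card_le_card_of_injOn (fun p => p.1)
              · intro p hp
                exact (Finset.mem_product.mp (Finset.mem_filter.mp hp).1).1
              · intro p hp p' hp' he
                simp only [Finset.coe_filter, Set.mem_setOf_eq] at hp hp'
                exact Prod.ext he (by rw [← hp.2, ← hp'.2]; exact he)
          _ = q := hS
      · calc q = S.card := hS.symm
          _ ≤ ((S ×ˢ S).filter (fun p => p.1 = p.2)).card := by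
              apply Finset.card_le_card_of_injOn (fun x => (x, x))
              · intro x hx
                simp [Finset.mem_filter, Finset.mem_product, Finset.mem_coe.mp hx]
              · intro x _ y _ he
                exact (Prod.ext_iff.mp he).1
    -- sum bound
    have hsum : ∑ k ∈ Finset.range N, Z k + 2 * N ≤ 3 * q * N + q * q := by
      rw [hswap]
      rw [← Finset.sum_filter_add_sum_filter_not (S ×ˢ S) (fun p => p.1 = p.2)]
      have hb1 : ∑ p ∈ (S ×ˢ S).filter (fun p => p.1 = p.2),
          ((Finset.range N).filter (fun k => f k p.1 = f k p.2)).card ≤ q * N := by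
        calc _ ≤ ((S ×ˢ S).filter (fun p => p.1 = p.2)).card • N := by
              apply Finset.sum_le_card_nsmul
              intro p _
              exact (Finset.card_filter_le _ _).trans_eq (Finset.card_range N)
          _ = q * N := by rw [hdcard, smul_eq_mul]
      have hb2 : ∑ p ∈ (S ×ˢ S).filter (fun p => ¬ p.1 = p.2),
          ((Finset.range N).filter (fun k => f k p.1 = f k p.2)).card
          ≤ (q * q - q) * (2 * (N / q) + 1) := by
        have hcard2 : ((S ×ˢ S).filter (fun p => ¬ p.1 = p.2)).card = q * q - q := by
          have := Finset.card_filter_add_card_filter_not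
            (s := S ×ˢ S) (p := fun p => p.1 = p.2)
          rw [Finset.card_product, hS] at this
          omega
        calc _ ≤ ((S ×ˢ S).filter (fun p => ¬ p.1 = p.2)).card • (2 * (N / q) + 1) := by
              apply Finset.sum_le_card_nsmul
              intro p hp
              simp only [Finset.mem_filter, Finset.mem_product] at hp
              exact pair_count q N hq0 hNp p.1 p.2 hp.2 (hNd p.1 hp.1.1 p.2 hp.1.2)
          _ = (q * q - q) * (2 * (N / q) + 1) := by rw [hcard2, smul_eq_mul]
      have harith : q * N + (q * q - q) * (2 * (N / q) + 1) + 2 * N ≤ 3 * q * N + q * q := by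
        have hA : q * (N / q) ≤ N := Nat.mul_div_le N q
        have hqq : q ≤ q * q := Nat.le_mul_of_pos_left q hq0
        zify [hqq]
        nlinarith [hA, hq3, hN0]
      omega
    -- pigeonhole
    have hex : ∃ k, k ∈ Finset.range N ∧ Z k + 2 ≤ 3 * q := by
      by_contra hcon
      push_neg at hcon
      have hlow : ∀ k ∈ Finset.range N, 3 * q ≤ Z k + 1 := by
        intro k hk
        have := hcon k hk
        omega
      have : N * (3 * q) ≤ ∑ k ∈ Finset.range N, (Z k + 1) := by
        calc N * (3 * q) = ∑ _k ∈ Finset.range N, 3 * q := by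
              rw [Finset.sum_const, Finset.card_range, smul_eq_mul]
          _ ≤ _ := Finset.sum_le_sum hlow
      rw [Finset.sum_add_distrib, Finset.sum_const, Finset.card_range, smul_eq_mul, mul_one] at this
      have h3qN : N * (3 * q) = 3 * q * N := by ring
      omega
    obtain ⟨k, hkr, hkZ⟩ := hex
    rw [Finset.mem_range] at hkr
    have hk0 : k ≠ 0 := by
      intro h0
      subst h0
      have : Z 0 = q * q := by
        have he : ∀ x : ℤ, f 0 x = 0 := by
          intro x
          simp [hf]
        have hfil : (S ×ˢ S).filter (fun p => f 0 p.1 = f 0 p.2) = S ×ˢ S :=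
          Finset.filter_true_of_mem (fun p _ => by rw [he, he])
        simp only [hZ]
        rw [hfil, Finset.card_product, hS]
      rw [this] at hkZ
      nlinarith [hkZ, hq3]
    -- final
    refine ⟨(k : ℝ) / (N : ℝ), ⟨?_, ?_⟩, ?_⟩
    · apply div_pos
      · exact_mod_cast Nat.pos_of_ne_zero hk0
      · exact_mod_cast hN0
    · rw [div_lt_one (by exact_mod_cast hN0)]
      exact_mod_cast hkr
    · have hcs := cs_fibers S (f k)
      rw [hS] at hcs
      set T := S.image (f k) with hT
      have hTgoal : (q : ℝ) / 3 < (T.card : ℝ) := by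
        have hq3T : q < 3 * T.card := by
          by_contra hcon
          push_neg at hcon
          have h1 : 3 * (q ^ 2) ≤ (3 * T.card) * Z k := by
            calc 3 * (q ^ 2) ≤ 3 * (T.card * Z k) := Nat.mul_le_mul_left 3 hcs
              _ = (3 * T.card) * Z k := by ring
          have h2 : (3 * T.card) * Z k ≤ q * Z k := Nat.mul_le_mul_right _ hcon
          have h3 : q * (Z k + 2) ≤ q * (3 * q) := Nat.mul_le_mul_left _ hkZ
          nlinarith [h1, h2, h3, hq0]
        rw [div_lt_iff₀ (by norm_num : (0:ℝ) < 3)]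
        calc (q : ℝ) < (3 * T.card : ℕ) := by exact_mod_cast hq3T
          _ = (T.card : ℝ) * 3 := by push_cast; ring
      exact hTgoal
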